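/- Let G be a discrete group, N a normal subgroup, B a *-algebra, and α: G → Aut(B) an action of G on B by *-automorphisms. Form C = B⋊G⋊G⋊N, the crossed product of B by α, then by the dual grading (degree of (b,r) is r) yielding B⋊G⋊G, then the restriction to N of the double-dual action (the dual action of the second crossed product, restricted to N). Form also D = B⋊N⋊G⋊G, starting from the restricted action α|_N, then the decomposition action α^dec_r(b, n) = (α_r(b), r n r⁻¹) of G on B⋊N, then the dual grading and its crossed product by G. Then the map on generators (b, r, s, n) ↦ (b, r s n s⁻¹ r⁻¹, r s n⁻¹ s⁻¹, s n) extends to a *-algebra isomorphism C ≅ D. -/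

import Mathlib

/-!
Statement 4 (Proposition 4.2 of Kaliszewski–Quigg): for a discrete group `G`,
`N ⊴ G`, and an action `α` of `G` on a *-algebra `B` by *-automorphisms, the map
on generators `(b, r, s, n) ↦ (b, r s n s⁻¹ r⁻¹, r s n⁻¹ s⁻¹, s n)` extends to a
*-algebra isomorphism `B ⋊ G ⋊ G ⋊ N ≅ B ⋊ N ⋊ G ⋊ G`.

`C = B ⋊ G ⋊ G ⋊ N` is modelled on `(G × G × ↥N) →₀ B`, generator `(b, r, s, n)`,
with iterated crossed-product operations
  mul: `(a,r,s,n)(b,r',s',n') = (a α_r(b), rr', s' n⁻¹, n n')` if `s = r' s' n⁻¹`;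
  star: `(a,r,s,n)* = (α_{r⁻¹}(a*), r⁻¹, r s n, n⁻¹)`.
`D = B ⋊ N ⋊ G ⋊ G` is modelled on `(↥N × G × G) →₀ B`, generator `(b, n, r, s)`,
with
  mul: `(a,n,r,s)(b,m,r',s') = (a α_n(α_r(b)), n·(r m r⁻¹), r r', s')` if `s = r' s'`;
  star: `(a,n,r,s)* = (α_{r⁻¹}(α_{n⁻¹}(a*)), r⁻¹ n⁻¹ r, r⁻¹, r s)`.
-/

attribute [local instance] Classical.propDecidable

noncomputable section

variable {G : Type*} [Group G] {B : Type*} [Ring B] [Algebra ℂ B] [StarRing B]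
  [StarModule ℂ B] {N : Subgroup G} [hN : N.Normal]

variable (α : G →* (B ≃ₐ[ℂ] B))

/-- Multiplication on `C = B ⋊ G ⋊ G ⋊ N` (generators `(b, r, s, n)`). -/
def cMul (f g : (G × G × N) →₀ B) : (G × G × N) →₀ B :=
  f.sum fun p a => g.sum fun q b =>
    if p.2.1 = q.1 * q.2.1 * ((p.2.2 : G))⁻¹ then
      Finsupp.single (p.1 * q.1, q.2.1 * ((p.2.2 : G))⁻¹, p.2.2 * q.2.2)
        (a * α p.1 b)
    else 0

/-- Involution on `C = B ⋊ G ⋊ G ⋊ N`. -/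
def cStar (f : (G × G × N) →₀ B) : (G × G × N) →₀ B :=
  f.sum fun p a =>
    Finsupp.single (p.1⁻¹, p.1 * p.2.1 * (p.2.2 : G), p.2.2⁻¹)
      (α p.1⁻¹ (star a))

/-- Multiplication on `D = B ⋊ N ⋊ G ⋊ G` (generators `(b, n, r, s)`). -/
def dMul (f g : (N × G × G) →₀ B) : (N × G × G) →₀ B :=
  f.sum fun p a => g.sum fun q b =>
    if p.2.2 = q.2.1 * q.2.2 then
      Finsupp.single
        (p.1 * ⟨p.2.1 * (q.1 : G) * p.2.1⁻¹, hN.conj_mem _ q.1.2 p.2.1⟩,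
          p.2.1 * q.2.1, q.2.2)
        (a * α (p.1 : G) (α p.2.1 b))
    else 0

/-- Involution on `D = B ⋊ N ⋊ G ⋊ G`. -/
def dStar (f : (N × G × G) →₀ B) : (N × G × G) →₀ B :=
  f.sum fun p a =>
    Finsupp.single
      (⟨p.2.1⁻¹ * ((p.1 : G))⁻¹ * (p.2.1⁻¹)⁻¹, hN.conj_mem _ (N.inv_mem p.1.2) p.2.1⁻¹⟩,
        p.2.1⁻¹, p.2.1 * p.2.2)
      (α p.2.1⁻¹ (α ((p.1 : G))⁻¹ (star a)))

/-- The map `(b, r, s, n) ↦ (b, r s n s⁻¹ r⁻¹, r s n⁻¹ s⁻¹, s n)` (linearly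
extended). -/
def moveN (f : (G × G × N) →₀ B) : (N × G × G) →₀ B :=
  f.sum fun p a =>
    Finsupp.single
      (⟨(p.1 * p.2.1) * (p.2.2 : G) * (p.1 * p.2.1)⁻¹, hN.conj_mem _ p.2.2.2 _⟩,
        p.1 * p.2.1 * ((p.2.2 : G))⁻¹ * p.2.1⁻¹, p.2.1 * (p.2.2 : G)) a

/-- The index bijection underlying `moveN`. -/
def mvEquiv : (G × G × N) ≃ (N × G × G) where
  toFun p :=
    (⟨(p.1 * p.2.1) * (p.2.2 : G) * (p.1 * p.2.1)⁻¹, hN.conj_mem _ p.2.2.2 _⟩,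
      p.1 * p.2.1 * ((p.2.2 : G))⁻¹ * p.2.1⁻¹, p.2.1 * (p.2.2 : G))
  invFun q :=
    ((q.1 : G) * q.2.1,
      q.2.1⁻¹ * ((q.1 : G))⁻¹ * q.2.1 * q.2.2,
      (⟨(q.2.1 * q.2.2)⁻¹ * (q.1 : G) * (q.2.1 * q.2.2), hN.conj_mem' _ q.1.2 _⟩ : N))
  left_inv := by
    rintro ⟨r, s, n⟩
    refine Prod.ext ?_ (Prod.ext ?_ ?_)
    · simp only []; group
    · simp only []; group
    · ext; simp only []; group
  right_inv := by
    rintro ⟨m, u, v⟩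
    refine Prod.ext ?_ (Prod.ext ?_ ?_)
    · ext; simp only []; group
    · simp only []; group
    · simp only []; group

lemma moveN_eq_mapDomain (f : (G × G × N) →₀ B) :
    moveN f = Finsupp.mapDomain (mvEquiv (N := N)) f := rfl

theorem moveN_is_star_algebra_isomorphism
    (hαstar : ∀ (s : G) (b : B), α s (star b) = star (α s b)) :
    -- `moveN` is the stated map on generators
    (∀ (r s : G) (n : N) (b : B),
      moveN (f := Finsupp.single (r, s, n) b) =
        Finsupp.single
          (⟨(r * s) * (n : G) * (r * s)⁻¹, hN.conj_mem _ n.2 _⟩,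
            r * s * ((n : G))⁻¹ * s⁻¹, s * (n : G)) b) ∧
    -- it is a linear bijection
    Function.Bijective (moveN (G := G) (B := B) (N := N)) ∧
    (∀ f g : (G × G × N) →₀ B, moveN (f + g) = moveN f + moveN g) ∧
    (∀ (c : ℂ) (f : (G × G × N) →₀ B), moveN (c • f) = c • moveN f) ∧
    -- it is multiplicative and *-preserving
    (∀ f g : (G × G × N) →₀ B, moveN (cMul α f g) = dMul α (moveN f) (moveN g)) ∧
    (∀ f : (G × G × N) →₀ B, moveN (cStar α f) = dStar α (moveN f)) := by
  have hmap : ∀ (r s : G) (n : N) (b : B),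
      Finsupp.mapDomain (mvEquiv (N := N)) (Finsupp.single (r, s, n) b) =
        Finsupp.single (mvEquiv (N := N) (r, s, n)) b := fun _ _ _ _ =>
    Finsupp.mapDomain_single
  refine ⟨?_, ?_, ?_, ?_, ?_, ?_⟩
  · intro r s n b
    rw [moveN_eq_mapDomain, hmap]
    rfl
  · have h : (moveN (G := G) (B := B) (N := N)) =
        ⇑(Finsupp.equivCongrLeft (M := B) (mvEquiv (N := N))) := by
      funext f
      rw [Finsupp.equivCongrLeft_apply, Finsupp.equivMapDomain_eq_mapDomain,
        moveN_eq_mapDomain]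
    rw [h]
    exact (Finsupp.equivCongrLeft _).bijective
  · intro f g
    simp only [moveN_eq_mapDomain, Finsupp.mapDomain_add]
  · intro c f
    simp only [moveN_eq_mapDomain, Finsupp.mapDomain_smul]
  · intro f g
    simp only [moveN_eq_mapDomain, cMul, dMul, Finsupp.mapDomain_sum]
    rw [Finsupp.sum_mapDomain_index_inj (mvEquiv (N := N)).injective]
    refine Finsupp.sum_congr fun p _ => ?_
    rw [Finsupp.sum_mapDomain_index_inj (mvEquiv (N := N)).injective]
    refine Finsupp.sum_congr fun q _ => ?_
    obtain ⟨r, s, n⟩ := p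
    obtain ⟨r', s', n'⟩ := q
    simp only [mvEquiv, Equiv.coe_fn_mk]
    have hcond : (s = r' * s' * ((n : G))⁻¹) ↔
        (s * (n : G) = r' * s' * ((n' : G))⁻¹ * s'⁻¹ * (s' * (n' : G))) := by
      constructor
      · intro h; subst h; group
      · intro h
        have : s = r' * s' * ((n' : G))⁻¹ * s'⁻¹ * (s' * (n' : G)) * ((n : G))⁻¹ := by
          rw [← h]; group
        rw [this]; group
    by_cases h : s = r' * s' * ((n : G))⁻¹
    · rw [if_pos h]
      simp only [iff_true_intro (hcond.mp h), if_true]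
      rw [Finsupp.mapDomain_single]
      have hc : ((r * s) * (n : G) * (r * s)⁻¹) * (r * s * ((n : G))⁻¹ * s⁻¹) = r := by
        group
      subst h
      congr 1
      · simp only [mvEquiv, Equiv.coe_fn_mk]
        refine Prod.ext ?_ (Prod.ext ?_ ?_)
        · ext
          push_cast
          group
        · push_cast
          group
        · push_cast
          group
      · rw [← AlgEquiv.mul_apply, ← map_mul, hc]
    · rw [if_neg h]
      simp only [iff_false_intro (fun hc => h (hcond.mpr hc)), if_false]
      rw [Finsupp.mapDomain_zero]
  · intro f
    simp only [moveN_eq_mapDomain, cStar, dStar, Finsupp.mapDomain_sum]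
    rw [Finsupp.sum_mapDomain_index_inj (mvEquiv (N := N)).injective]
    refine Finsupp.sum_congr fun p _ => ?_
    obtain ⟨r, s, n⟩ := p
    simp only [mvEquiv, Equiv.coe_fn_mk, Finsupp.mapDomain_single]
    congr 1
    · refine Prod.ext ?_ (Prod.ext ?_ ?_)
      · ext
        push_cast
        group
      · push_cast
        group
      · push_cast
        group
    · have hc : (r * s * ((n : G))⁻¹ * s⁻¹)⁻¹ *
          ((r * s) * (n : G) * (r * s)⁻¹)⁻¹ = r⁻¹ := by group
      rw [← AlgEquiv.mul_apply, ← map_mul, hc]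

end
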